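/- Let κ be an algebraically closed field of characteristic p > 0. Then the absolute Galois group of the Laurent series field κ((x)) — i.e., the Galois group of a separable closure of κ((x)) over κ((x)), equipped with the Krull topology — is not topologically finitely generated: there is no finite subset whose generated subgroup is dense. -/

import Mathlib

set_option maxHeartbeats 1000000
set_option synthInstance.maxHeartbeats 200000


/-- The absolute Galois group of a field `K`: the group of `K`-algebra automorphisms of a
separable closure of `K` (realized inside an algebraic closure), carrying the Krull
topology. -/
abbrev AbsoluteGaloisGroup (K : Type*) [Field K] : Type _ :=
  separableClosure K (AlgebraicClosure K) ≃ₐ[K] separableClosure K (AlgebraicClosure K)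

/-- In a field of characteristic `p`, every solution of `y ^ p = y` comes from `ZMod p`. -/
lemma exists_zmod_of_pow_char_eq {F : Type*} [Field F] (p : ℕ) [Fact p.Prime] [CharP F p]
    {y : F} (h : y ^ p = y) : ∃ c : ZMod p, ZMod.castHom (dvd_refl p) F c = y := by
  classical
  have hp : p.Prime := Fact.out
  set e := ZMod.castHom (dvd_refl p) F with he
  have einj : Function.Injective e := e.injective
  set f : Polynomial F := Polynomial.X ^ p - Polynomial.X with hf
  have hf0 : f ≠ 0 := by
    have hc : f.coeff p = 1 := by
      have hp1 : p ≠ 1 := hp.ne_one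
      simp [hf, Polynomial.coeff_X_pow, Polynomial.coeff_X, hp1, Ne.symm hp1]
    intro h0
    rw [h0, Polynomial.coeff_zero] at hc
    exact one_ne_zero hc.symm
  have hdeg : f.natDegree ≤ p := by
    refine le_trans (Polynomial.natDegree_sub_le _ _) ?_
    simp only [Polynomial.natDegree_X_pow, Polynomial.natDegree_X]
    exact max_le le_rfl hp.one_lt.le
  have hcard : Multiset.card f.roots ≤ p := le_trans (Polynomial.card_roots' f) hdeg
  set s : Finset F := Finset.univ.image e with hs
  have hscard : s.card = p := by
    rw [hs, Finset.card_image_of_injective _ einj, Finset.card_univ, ZMod.card]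
  have hsub : s ⊆ f.roots.toFinset := by
    intro z hz
    obtain ⟨c, -, rfl⟩ := Finset.mem_image.mp hz
    rw [Multiset.mem_toFinset, Polynomial.mem_roots hf0]
    have : (e c) ^ p = e c := by
      rw [← map_pow, ZMod.pow_card]
    simp [hf, Polynomial.IsRoot, this]
  have htcard : f.roots.toFinset.card ≤ Multiset.card f.roots := Multiset.toFinset_card_le _
  have hseq : s = f.roots.toFinset :=
    Finset.eq_of_subset_of_card_le hsub (by omega)
  have hy : y ∈ f.roots.toFinset := by
    rw [Multiset.mem_toFinset, Polynomial.mem_roots hf0]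
    simp [hf, Polynomial.IsRoot, h]
  rw [← hseq] at hy
  obtain ⟨c, -, hc⟩ := Finset.mem_image.mp hy
  exact ⟨c, hc⟩

/-- There is no solution to the Artin–Schreier equation
`b ^ p - b = x ^ (-M) - x ^ (-M')` in a Laurent series field, when `p ∤ M`, `p ∤ M'`,
`M ≠ M'`. -/
lemma no_laurent_AS {κ : Type*} [Field κ] {p M M' : ℕ} (hp : 2 ≤ p) (hM : ¬ p ∣ M)
    (hM' : ¬ p ∣ M') (hne : M ≠ M') (b : LaurentSeries κ) :
    b ^ p - b ≠ HahnSeries.single (-(M : ℤ)) 1 - HahnSeries.single (-(M' : ℤ)) 1 := by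
  intro hb
  have hMM' : (-(M : ℤ)) ≠ (-(M' : ℤ)) := by
    intro h
    exact hne (by exact_mod_cast neg_inj.mp h)
  have hM1 : 1 ≤ M := Nat.pos_of_ne_zero (fun h => hM (h ▸ dvd_zero p))
  have hgM : (HahnSeries.single (-(M : ℤ)) (1 : κ) -
      HahnSeries.single (-(M' : ℤ)) 1).coeff (-(M : ℤ)) = 1 := by
    rw [HahnSeries.coeff_sub, HahnSeries.coeff_single_same,
      HahnSeries.coeff_single_of_ne hMM', sub_zero]
  by_cases hb0 : b = 0
  · rw [hb0, zero_pow (by omega), sub_zero] at hb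
    rw [← hb] at hgM
    simp at hgM
  have hbp0 : b ^ p ≠ 0 := pow_ne_zero _ hb0
  set d := b.order with hd
  have horder : (b ^ p).order = (p : ℤ) * d := by
    rw [HahnSeries.order_pow, nsmul_eq_mul]
  have hM1' : (1 : ℤ) ≤ (M : ℤ) := by exact_mod_cast hM1
  rcases le_or_gt 0 d with hdpos | hdneg
  · have hcM : (-(M : ℤ)) < (b ^ p).order := by
      rw [horder]
      have h0 : (0 : ℤ) ≤ (p : ℤ) * d := mul_nonneg (by positivity) hdpos
      linarith
    have hcM2 : (-(M : ℤ)) < b.order := by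
      rw [← hd]
      linarith
    have h1 : (b ^ p - b).coeff (-(M : ℤ)) = 0 := by
      rw [HahnSeries.coeff_sub, HahnSeries.coeff_eq_zero_of_lt_order hcM,
        HahnSeries.coeff_eq_zero_of_lt_order hcM2, sub_zero]
    rw [hb, hgM] at h1
    exact one_ne_zero h1
  · set E : ℤ := (p : ℤ) * d with hE
    have hp2' : (2 : ℤ) ≤ (p : ℤ) := by exact_mod_cast hp
    have hEd : E < d := by
      have h6 : (p : ℤ) * d ≤ 2 * d := mul_le_mul_of_nonpos_right hp2' hdneg.le
      rw [← hE] at h6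
      omega
    have h2 : (b ^ p - b).coeff E = (b ^ p).coeff E := by
      rw [HahnSeries.coeff_sub, HahnSeries.coeff_eq_zero_of_lt_order hEd, sub_zero]
    have h3 : (b ^ p).coeff E ≠ 0 := by
      have h4 := HahnSeries.coeff_order_eq_zero.not.mpr hbp0
      rwa [horder] at h4
    rw [hb] at h2
    by_cases hEM : E = -(M : ℤ)
    · refine hM (Int.natCast_dvd_natCast.mp ⟨-d, ?_⟩)
      rw [mul_neg, ← hE, hEM]
      omega
    by_cases hEM' : E = -(M' : ℤ)
    · refine hM' (Int.natCast_dvd_natCast.mp ⟨-d, ?_⟩)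
      rw [mul_neg, ← hE, hEM']
      omega
    rw [HahnSeries.coeff_sub, HahnSeries.coeff_single_of_ne hEM,
      HahnSeries.coeff_single_of_ne hEM', sub_zero] at h2
    exact h3 h2.symm

/-- In a Galois extension, any element fixed by the full automorphism group comes from the
base field. -/
lemma exists_algebraMap_of_fixed {K L : Type*} [Field K] [Field L] [Algebra K L]
    [IsGalois K L] {β : L} (h : ∀ σ : L ≃ₐ[K] L, σ β = β) :
    ∃ b : K, algebraMap K L b = β := by
  classical
  have hsep : IsSeparable K β := Algebra.IsSeparable.isSeparable K β
  have hint : IsIntegral K β := hsep.isIntegral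
  have hP0 : minpoly K β ≠ 0 := minpoly.ne_zero hint
  have hsplit : ((minpoly K β).map (algebraMap K L)).Splits :=
    Normal.splits inferInstance β
  set P := (minpoly K β).map (algebraMap K L) with hP
  have hPne : P ≠ 0 := by
    rw [hP]
    exact Polynomial.map_ne_zero hP0
  have hroots : ∀ z ∈ P.roots, z = β := by
    intro z hz
    have hz0 : Polynomial.aeval z (minpoly K β) = 0 := by
      have h5 := (Polynomial.mem_roots hPne).mp hz
      rwa [Polynomial.IsRoot, hP, Polynomial.eval_map, ← Polynomial.aeval_def] at h5
    obtain ⟨σ, hσ⟩ := minpoly.exists_algEquiv_of_root' hint.isAlgebraic hz0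
    rw [h σ] at hσ
    exact hσ.symm
  have hnodup : P.roots.Nodup := Polynomial.nodup_roots (Polynomial.Separable.map hsep)
  have hcard : (minpoly K β).natDegree = Multiset.card P.roots :=
    by rw [← Polynomial.natDegree_map (algebraMap K L)]; exact hsplit.natDegree_eq_card_roots
  have hle : Multiset.card P.roots ≤ 1 := by
    have hfin : P.roots.toFinset ⊆ {β} := by
      intro z hz
      simp [hroots z (Multiset.mem_toFinset.mp hz)]
    have := Finset.card_le_card hfin
    rwa [Multiset.toFinset_card_of_nodup hnodup, Finset.card_singleton] at this
  have h1 : (minpoly K β).natDegree = 1 :=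
    le_antisymm (hcard ▸ hle) (minpoly.natDegree_pos hint)
  have hdeg1 : (minpoly K β).degree = 1 := by
    rw [Polynomial.degree_eq_natDegree hP0, h1, Nat.cast_one]
  exact minpoly.degree_eq_one_iff.mp hdeg1

/-- Key lemma: over a field `K` of characteristic `p`, given a sequence `a : ℕ → K` such
that no difference `a i - a j` (`i ≠ j`) is of the form `b ^ p - b`, the absolute Galois
group of `K` is not topologically finitely generated. -/
lemma keylemma (K : Type*) [Field K] (p : ℕ) (hp : p.Prime) [CharP K p]
    (a : ℕ → K) (hdist : ∀ i j : ℕ, i ≠ j → ∀ b : K, b ^ p - b ≠ a i - a j) :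
    ¬ ∃ S : Set (AbsoluteGaloisGroup K),
      S.Finite ∧ Dense ((Subgroup.closure S : Subgroup (AbsoluteGaloisGroup K)) :
        Set (AbsoluteGaloisGroup K)) := by
  classical
  haveI : Fact p.Prime := ⟨hp⟩
  haveI : NeZero p := ⟨hp.ne_zero⟩
  rintro ⟨S, hSfin, hdense⟩
  set Ω := AlgebraicClosure K with hΩ
  set SC := separableClosure K Ω with hSC
  haveI : CharP SC p := charP_of_injective_algebraMap (algebraMap K SC).injective p
  set e := ZMod.castHom (dvd_refl p) SC with he
  have einj : Function.Injective e := e.injective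
  -- Existence of Artin-Schreier roots in the separable closure
  have hAS : ∀ c : K, ∃ α : SC, α ^ p - α = algebraMap K SC c := by
    intro c
    set q : Polynomial K := Polynomial.X ^ p - (Polynomial.X + Polynomial.C c) with hq
    have hdegq : q.degree = (p : ℕ) := by
      rw [hq]
      rw [Polynomial.degree_sub_eq_left_of_degree_lt]
      · exact Polynomial.degree_X_pow p
      · rw [Polynomial.degree_X_pow, Polynomial.degree_X_add_C]
        exact_mod_cast hp.one_lt
    have hqne : (q.map (algebraMap K Ω)).degree ≠ 0 := by
      rw [Polynomial.degree_map, hdegq]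
      exact_mod_cast hp.ne_zero
    obtain ⟨z, hz⟩ := IsAlgClosed.exists_root (q.map (algebraMap K Ω)) hqne
    have hz' : Polynomial.aeval z q = 0 := by
      rw [Polynomial.aeval_def, ← Polynomial.eval_map]
      exact hz
    have hzq : z ^ p - (z + algebraMap K Ω c) = 0 := by
      simpa [hq] using hz'
    have hder : q.derivative = -1 := by
      simp [hq, Polynomial.derivative_X_pow, CharP.cast_eq_zero K p]
    have hqsep : q.Separable := by
      rw [Polynomial.separable_def, hder]
      exact ⟨0, -1, by ring⟩
    have hzsep : IsSeparable K z := hqsep.of_dvd (minpoly.dvd K z hz')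
    have hz_mem : z ∈ separableClosure K Ω := mem_separableClosure_iff.mpr hzsep
    refine ⟨⟨z, hz_mem⟩, ?_⟩
    apply Subtype.ext
    push_cast
    have halg : ((algebraMap K SC c : SC) : Ω) = algebraMap K Ω c :=
      (IsScalarTower.algebraMap_apply K SC Ω c).symm
    linear_combination hzq
  choose α hα using fun i => hAS (a i)
  -- The Artin-Schreier characters
  have hfix : ∀ (c : ZMod p) (σ : AbsoluteGaloisGroup K), σ (e c) = e c := by
    intro c σ
    rw [he, ZMod.castHom_apply, ← ZMod.natCast_val, map_natCast]
  have hphi : ∀ (i : ℕ) (σ : AbsoluteGaloisGroup K),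
      ∃ c : ZMod p, e c = σ (α i) - α i := by
    intro i σ
    have h1 : (σ (α i)) ^ p - σ (α i) = algebraMap K SC (a i) := by
      rw [← map_pow, ← map_sub, hα i]
      exact σ.commutes (a i)
    have h2 : (σ (α i) - α i) ^ p = σ (α i) - α i := by
      rw [sub_pow_char]
      have h3 := hα i
      have h4 : (α i) ^ p = α i + algebraMap K SC (a i) := by linear_combination h3
      have h5 : (σ (α i)) ^ p = σ (α i) + algebraMap K SC (a i) := by linear_combination h1
      rw [h4, h5]
      ring
    exact exists_zmod_of_pow_char_eq p h2
  choose φ hφ using hphi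
  -- Additivity
  have hadd : ∀ (i : ℕ) (σ τ : AbsoluteGaloisGroup K),
      φ i (σ * τ) = φ i σ + φ i τ := by
    intro i σ τ
    apply einj
    rw [map_add, hφ i (σ * τ), hφ i σ, hφ i τ]
    rw [AlgEquiv.mul_apply]
    have h2 : τ (α i) = α i + e (φ i τ) := by linear_combination -(hφ i τ)
    rw [h2, map_add σ, hfix (φ i τ) σ]
    ring
  have hone : ∀ i : ℕ, φ i 1 = 0 := by
    intro i
    have h7 := hadd i 1 1
    rw [mul_one] at h7
    linear_combination -h7
  have hinv : ∀ (i : ℕ) (σ : AbsoluteGaloisGroup K), φ i σ⁻¹ = -φ i σ := by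
    intro i σ
    have h7 := hadd i σ σ⁻¹
    rw [mul_inv_cancel, hone i] at h7
    linear_combination -h7
  -- Vanishing on fixing subgroups
  have hker : ∀ (i : ℕ) (σ : AbsoluteGaloisGroup K), σ (α i) = α i → φ i σ = 0 := by
    intro i σ hσ
    apply einj
    rw [hφ i σ, hσ, sub_self, map_zero]
  -- Topology on ZMod p
  letI : TopologicalSpace (ZMod p) := ⊥
  haveI : DiscreteTopology (ZMod p) := ⟨rfl⟩
  -- Continuity
  have hcont : ∀ i : ℕ, Continuous (φ i) := by
    intro i
    have hint : IsIntegral K (α i) :=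
      (Algebra.IsSeparable.isSeparable K (α i)).isIntegral
    letI := IntermediateField.adjoin.finiteDimensional hint
    have hopen : IsOpen ((IntermediateField.adjoin K {α i}).fixingSubgroup :
        Set (AbsoluteGaloisGroup K)) :=
      IntermediateField.fixingSubgroup_isOpen _
    rw [continuous_def]
    intro s _
    rw [isOpen_iff_forall_mem_open]
    intro σ₀ hσ₀
    refine ⟨(fun g => σ₀⁻¹ * g) ⁻¹'
      ((IntermediateField.adjoin K {α i}).fixingSubgroup : Set (AbsoluteGaloisGroup K)),
      ?_, hopen.preimage (continuous_mul_left σ₀⁻¹), ?_⟩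
    swap
    · simp only [Set.mem_preimage, inv_mul_cancel, SetLike.mem_coe]
      exact Subgroup.one_mem _
    intro g hg
    have hg' : (σ₀⁻¹ * g) (α i) = α i := by
      exact (IntermediateField.mem_fixingSubgroup_iff _ (σ₀⁻¹ * g)).mp hg (α i)
        (IntermediateField.mem_adjoin_simple_self K (α i))
    have : φ i g = φ i σ₀ := by
      have h1 : g = σ₀ * (σ₀⁻¹ * g) := by group
      rw [h1, hadd, hker i _ hg', add_zero]
    simpa [this] using hσ₀
  -- Distinctness
  have hdiff : ∀ i j : ℕ, i ≠ j → φ i ≠ φ j := by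
    intro i j hij heq
    set β : SC := α i - α j with hβ
    have hfixβ : ∀ σ : AbsoluteGaloisGroup K, σ β = β := by
      intro σ
      have h1 : σ (α i) = α i + e (φ i σ) := by
        have := hφ i σ; linear_combination -this
      have h2 : σ (α j) = α j + e (φ j σ) := by
        have := hφ j σ; linear_combination -this
      rw [hβ, map_sub, h1, h2, heq]
      ring
    obtain ⟨b, hb⟩ := exists_algebraMap_of_fixed hfixβ
    have hbeq : algebraMap K SC (b ^ p - b) = algebraMap K SC (a i - a j) := by
      rw [map_sub, map_pow, hb, map_sub]
      have h4 : (α i) ^ p = α i + algebraMap K SC (a i) := by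
        linear_combination hα i
      have h5 : (α j) ^ p = α j + algebraMap K SC (a j) := by
        linear_combination hα j
      rw [hβ, sub_pow_char, h4, h5]
      ring
    exact hdist i j hij b ((algebraMap K SC).injective hbeq)
  -- Pigeonhole
  haveI := hSfin.to_subtype
  obtain ⟨i, j, hij, hFij⟩ :=
    Finite.exists_ne_map_eq_of_infinite (fun i : ℕ => fun s : S => φ i s)
  apply hdiff i j hij
  apply Continuous.ext_on hdense (hcont i) (hcont j)
  intro g hg
  have hg' : g ∈ Subgroup.closure S := hg
  clear hg
  induction hg' using Subgroup.closure_induction with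
  | mem x hx => exact congrFun hFij ⟨x, hx⟩
  | one => rw [hone i, hone j]
  | mul x y hx hy ihx ihy => rw [hadd, hadd, ihx, ihy]
  | inv x hx ihx => rw [hinv, hinv, ihx]

/-- For `κ` algebraically closed of characteristic `p > 0`, the absolute
Galois group of the Laurent series field `κ((x))` (the Galois group of a separable closure,
with the Krull topology) is not topologically finitely generated: no finite subset generates
a dense subgroup. -/
theorem absoluteGaloisGroup_laurentSeries_not_topologically_finitely_generated
    (κ : Type*) [Field κ] [IsAlgClosed κ] (p : ℕ) (hp : p.Prime) [CharP κ p] :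
    ¬ ∃ S : Set (AbsoluteGaloisGroup (LaurentSeries κ)),
      S.Finite ∧
        Dense ((Subgroup.closure S : Subgroup (AbsoluteGaloisGroup (LaurentSeries κ))) :
          Set (AbsoluteGaloisGroup (LaurentSeries κ))) := by
  haveI : CharP (LaurentSeries κ) p :=
    charP_of_injective_algebraMap (algebraMap κ (LaurentSeries κ)).injective p
  refine keylemma (LaurentSeries κ) p hp
    (fun i => HahnSeries.single (-((i * p + 1 : ℕ) : ℤ)) 1) ?_
  intro i j hij b hb
  have hp2 : 2 ≤ p := hp.two_le
  have hMi : ¬ p ∣ (i * p + 1) := by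
    intro h
    have : p ∣ 1 := (Nat.dvd_add_right ⟨i, mul_comm i p⟩).mp h
    exact hp.one_lt.ne' (Nat.dvd_one.mp this)
  have hMj : ¬ p ∣ (j * p + 1) := by
    intro h
    have : p ∣ 1 := (Nat.dvd_add_right ⟨j, mul_comm j p⟩).mp h
    exact hp.one_lt.ne' (Nat.dvd_one.mp this)
  have hne : i * p + 1 ≠ j * p + 1 := by
    intro h
    exact hij (Nat.eq_of_mul_eq_mul_right hp.pos (by omega))
  exact no_laurent_AS hp2 hMi hMj hne b hb
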